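/- Let L be a Lie algebra over a field K of characteristic ≠ 2, and let x ∈ L be an extremal element with associated linear form f_x. Then for all y, z ∈ L, the second Premet identity holds: 2 • ⁅⁅x,y⁆, ⁅x,z⁆⁆ = f_x(⁅y,z⁆) • x + f_x(z) • ⁅x,y⁆ - f_x(y) • ⁅x,z⁆. -/
import Mathlib


theorem premet_identity_two {K L : Type*} [Field K] [LieRing L] [LieAlgebra K L]
    (hchar : (2 : K) ≠ 0) (x : L) (fx : L →ₗ[K] K)
    (hx : ∀ y : L, ⁅x, ⁅x, y⁆⁆ = fx y • x) :
    ∀ y z : L, (2 : K) • ⁅⁅x, y⁆, ⁅x, z⁆⁆ =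
      fx ⁅y, z⁆ • x + fx z • ⁅x, y⁆ - fx y • ⁅x, z⁆ := by
  intro y z
  have h1 : ⁅x, ⁅⁅x, y⁆, z⁆⁆ = fx y • ⁅x, z⁆ + ⁅⁅x, y⁆, ⁅x, z⁆⁆ := by
    rw [leibniz_lie, hx, smul_lie]
  have h2 : ⁅⁅x, y⁆, ⁅x, z⁆⁆ = ⁅x, ⁅y, ⁅x, z⁆⁆⁆ - fx z • ⁅y, x⁆ := by
    rw [lie_lie, hx, lie_smul]
  have h3 : ⁅y, ⁅x, z⁆⁆ = ⁅⁅y, x⁆, z⁆ + ⁅x, ⁅y, z⁆⁆ := leibniz_lie y x z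
  have h4 : ⁅x, ⁅y, ⁅x, z⁆⁆⁆ = -⁅x, ⁅⁅x, y⁆, z⁆⁆ + fx ⁅y, z⁆ • x := by
    rw [h3, lie_add, hx, ← lie_skew y x, neg_lie, lie_neg]
  have key : ⁅⁅x, y⁆, ⁅x, z⁆⁆ + ⁅⁅x, y⁆, ⁅x, z⁆⁆ =
      fx ⁅y, z⁆ • x + fx z • ⁅x, y⁆ - fx y • ⁅x, z⁆ := by
    have := h2
    rw [h4, h1, ← lie_skew y x, smul_neg] at this
    linear_combination (norm := module) this
  rw [two_smul]
  exact key
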